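/- Let γ : ℝ → ℂ be a C¹-smooth, 2π-periodic map and let a, λ ∈ ℝ. Suppose that γ(t + 2a) − γ(t) = λ·γ'(t + a) for all t ∈ ℝ. Then for every integer n with c_n(γ) ≠ 0 one has e^{2ina} − 1 = i·λ·n·e^{ina}; equivalently, λ·n = 2·sin(n·a). -/

import Mathlib

open Complex intervalIntegral Real

/-- The `n`-th Fourier coefficient of a `2π`-periodic function `γ : ℝ → ℂ`. -/
noncomputable def fourierCoef (γ : ℝ → ℂ) (n : ℤ) : ℂ :=
  (1 / (2 * (Real.pi : ℂ))) * ∫ t in (0 : ℝ)..(2 * Real.pi),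
    γ t * Complex.exp (-(Complex.I * n * t))

lemma exp_periodic (n : ℤ) :
    Function.Periodic (fun t : ℝ => Complex.exp (-(Complex.I * n * t))) (2 * Real.pi) := by
  intro t
  simp only
  have : -(Complex.I * n * ((t + 2 * Real.pi : ℝ) : ℂ)) =
      -(Complex.I * n * t) + (-n : ℤ) * (2 * Real.pi * Complex.I) := by
    push_cast; ring
  rw [this, Complex.exp_add, Complex.exp_int_mul_two_pi_mul_I, mul_one]

lemma integrand_periodic (g : ℝ → ℂ) (hper : ∀ t : ℝ, g (t + 2 * Real.pi) = g t) (n : ℤ) :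
    Function.Periodic (fun t : ℝ => g t * Complex.exp (-(Complex.I * n * t))) (2 * Real.pi) := by
  intro t
  simp only [hper t, exp_periodic n t]

lemma shift_integral (g : ℝ → ℂ) (hg : Continuous g)
    (hper : ∀ t : ℝ, g (t + 2 * Real.pi) = g t) (n : ℤ) (s : ℝ) :
    (∫ t in (0:ℝ)..(2 * Real.pi), g (t + s) * Complex.exp (-(Complex.I * n * t))) =
      Complex.exp (Complex.I * n * s) *
        ∫ t in (0:ℝ)..(2 * Real.pi), g t * Complex.exp (-(Complex.I * n * t)) := by
  have key : ∀ t : ℝ, g (t + s) * Complex.exp (-(Complex.I * n * t)) =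
      Complex.exp (Complex.I * n * s) *
        (g (t + s) * Complex.exp (-(Complex.I * n * ((t + s : ℝ) : ℂ)))) := by
    intro t
    have h : Complex.exp (-(Complex.I * n * ((t + s : ℝ) : ℂ))) *
        Complex.exp (Complex.I * n * s) = Complex.exp (-(Complex.I * n * t)) := by
      rw [← Complex.exp_add]; congr 1; push_cast; ring
    linear_combination (-(g (t + s))) * h
  simp_rw [key]
  rw [intervalIntegral.integral_const_mul]
  congr 1
  have := intervalIntegral.integral_comp_add_right (a := (0:ℝ)) (b := 2 * Real.pi)
    (fun u : ℝ => g u * Complex.exp (-(Complex.I * n * u))) s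
  rw [this]
  have hp := integrand_periodic g hper n
  have h2 := hp.intervalIntegral_add_eq s 0
  simpa [zero_add, add_comm] using h2

lemma deriv_integral (γ : ℝ → ℂ) (hγ : ContDiff ℝ 1 γ)
    (hper : ∀ t : ℝ, γ (t + 2 * Real.pi) = γ t) (n : ℤ) :
    (∫ t in (0:ℝ)..(2 * Real.pi), deriv γ t * Complex.exp (-(Complex.I * n * t))) =
      Complex.I * n *
        ∫ t in (0:ℝ)..(2 * Real.pi), γ t * Complex.exp (-(Complex.I * n * t)) := by
  set v : ℝ → ℂ := fun t => Complex.exp (-(Complex.I * n * t)) with hv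
  set v' : ℝ → ℂ := fun t => -(Complex.I * n) * Complex.exp (-(Complex.I * n * t)) with hv'
  have hvderiv : ∀ x : ℝ, HasDerivAt v (v' x) x := by
    intro x
    have h0 : HasDerivAt (fun t : ℝ => (t : ℂ)) 1 x := by
      exact (hasDerivAt_id x).ofReal_comp
    have h1 : HasDerivAt (fun t : ℝ => -(Complex.I * n) * (t : ℂ)) (-(Complex.I * n)) x := by
      simpa using h0.const_mul (-(Complex.I * n))
    have h2 : HasDerivAt (fun t : ℝ => -(Complex.I * (n : ℂ) * (t : ℂ))) (-(Complex.I * n)) x := by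
      convert h1 using 2 with t
      ring
    have := h2.cexp
    simpa [v, v', mul_comm] using this
  have hγd : ∀ x : ℝ, HasDerivAt γ (deriv γ x) x := fun x =>
    ((hγ.differentiable one_ne_zero) x).hasDerivAt
  have hcont_deriv : Continuous (deriv γ) := hγ.continuous_deriv le_rfl
  have hcont_v : Continuous v := by
    apply Complex.continuous_exp.comp
    continuity
  have hcont_v' : Continuous v' := by
    apply Continuous.mul continuous_const
    apply Complex.continuous_exp.comp
    continuity
  have hint1 : IntervalIntegrable (deriv γ) MeasureTheory.volume 0 (2 * Real.pi) :=
    hcont_deriv.intervalIntegrable _ _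
  have hint2 : IntervalIntegrable v' MeasureTheory.volume 0 (2 * Real.pi) :=
    hcont_v'.intervalIntegrable _ _
  have hib := intervalIntegral.integral_deriv_mul_eq_sub (u := γ) (v := v)
    (u' := deriv γ) (v' := v')
    (fun x _ => hγd x) (fun x _ => hvderiv x) hint1 hint2
  have hbd : γ (2 * Real.pi) * v (2 * Real.pi) - γ 0 * v 0 = 0 := by
    have h1 : γ (2 * Real.pi) = γ 0 := by simpa using hper 0
    have h2 : v (2 * Real.pi) = 1 := by
      have : -(Complex.I * (n : ℂ) * ((2 * Real.pi : ℝ) : ℂ)) = (-n : ℤ) * (2 * Real.pi * Complex.I) := by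
        push_cast; ring
      simp only [v, this, Complex.exp_int_mul_two_pi_mul_I]
    have h3 : v 0 = 1 := by simp [v]
    rw [h1, h2, h3]; ring
  rw [hbd] at hib
  have hsplit : (∫ t in (0:ℝ)..(2 * Real.pi), (deriv γ t * v t + γ t * v' t)) =
      (∫ t in (0:ℝ)..(2 * Real.pi), deriv γ t * v t) +
        ∫ t in (0:ℝ)..(2 * Real.pi), γ t * v' t := by
    apply intervalIntegral.integral_add
    · exact (hcont_deriv.mul hcont_v).intervalIntegrable _ _
    · exact ((hγ.continuous).mul hcont_v').intervalIntegrable _ _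
  rw [hsplit] at hib
  have h4 : (∫ t in (0:ℝ)..(2 * Real.pi), γ t * v' t) =
      -(Complex.I * n) * ∫ t in (0:ℝ)..(2 * Real.pi), γ t * v t := by
    rw [← intervalIntegral.integral_const_mul]
    congr 1 with t
    simp only [v, v']; ring
  rw [h4] at hib
  have := eq_neg_of_add_eq_zero_left hib
  rw [this]; ring

lemma deriv_periodic (γ : ℝ → ℂ) (hper : ∀ t : ℝ, γ (t + 2 * Real.pi) = γ t) :
    ∀ t : ℝ, deriv γ (t + 2 * Real.pi) = deriv γ t := by
  intro t
  have : (fun s => γ (s + 2 * Real.pi)) = γ := funext hper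
  calc deriv γ (t + 2 * Real.pi) = deriv (fun s => γ (s + 2 * Real.pi)) t :=
        (deriv_comp_add_const γ (2 * Real.pi) t).symm
    _ = deriv γ t := by rw [this]

theorem stmt_9 (γ : ℝ → ℂ) (hγ : ContDiff ℝ 1 γ)
    (hper : ∀ t : ℝ, γ (t + 2 * Real.pi) = γ t)
    (a lam : ℝ)
    (heq : ∀ t : ℝ, γ (t + 2 * a) - γ t = (lam : ℂ) * deriv γ (t + a)) :
    ∀ n : ℤ, fourierCoef γ n ≠ 0 →
      (Complex.exp (2 * Complex.I * n * a) - 1 =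
        Complex.I * lam * n * Complex.exp (Complex.I * n * a)) ∧
      lam * n = 2 * Real.sin (n * a) := by
  intro n hn
  set c : ℂ := ∫ t in (0:ℝ)..(2 * Real.pi), γ t * Complex.exp (-(Complex.I * n * t)) with hc
  have hcne : c ≠ 0 := by
    intro h
    apply hn
    unfold fourierCoef
    rw [← hc, h, mul_zero]
  have hcont : Continuous γ := hγ.continuous
  have hcontd : Continuous (deriv γ) := hγ.continuous_deriv le_rfl
  -- integrate the functional equation
  have hint : (∫ t in (0:ℝ)..(2 * Real.pi),
        (γ (t + 2 * a) - γ t) * Complex.exp (-(Complex.I * n * t))) =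
      ∫ t in (0:ℝ)..(2 * Real.pi),
        (lam : ℂ) * (deriv γ (t + a) * Complex.exp (-(Complex.I * n * t))) := by
    congr 1 with t
    rw [heq t]; ring
  have hLHS : (∫ t in (0:ℝ)..(2 * Real.pi),
        (γ (t + 2 * a) - γ t) * Complex.exp (-(Complex.I * n * t))) =
      Complex.exp (Complex.I * n * (2 * a)) * c - c := by
    have hsplit : (∫ t in (0:ℝ)..(2 * Real.pi),
          (γ (t + 2 * a) - γ t) * Complex.exp (-(Complex.I * n * t))) =
        (∫ t in (0:ℝ)..(2 * Real.pi), γ (t + 2 * a) * Complex.exp (-(Complex.I * n * t))) -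
          ∫ t in (0:ℝ)..(2 * Real.pi), γ t * Complex.exp (-(Complex.I * n * t)) := by
      rw [← intervalIntegral.integral_sub]
      · congr 1 with t; ring
      · exact ((hcont.comp (by continuity)).mul
          (Complex.continuous_exp.comp (by continuity))).intervalIntegrable _ _
      · exact (hcont.mul (Complex.continuous_exp.comp (by continuity))).intervalIntegrable _ _
    rw [hsplit, shift_integral γ hcont hper n (2 * a), ← hc]
    norm_num
  have hRHS : (∫ t in (0:ℝ)..(2 * Real.pi),
        (lam : ℂ) * (deriv γ (t + a) * Complex.exp (-(Complex.I * n * t)))) =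
      (lam : ℂ) * (Complex.exp (Complex.I * n * a) * (Complex.I * n * c)) := by
    rw [intervalIntegral.integral_const_mul]
    congr 1
    rw [shift_integral (deriv γ) hcontd (deriv_periodic γ hper) n a]
    congr 1
    exact deriv_integral γ hγ hper n
  have key : (Complex.exp (Complex.I * n * (2 * a)) - 1) * c =
      (Complex.I * lam * n * Complex.exp (Complex.I * n * a)) * c := by
    have := hint
    rw [hLHS, hRHS] at this
    push_cast at this ⊢
    linear_combination this
  have hmain : Complex.exp (Complex.I * n * (2 * a)) - 1 =
      Complex.I * lam * n * Complex.exp (Complex.I * n * a) :=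
    mul_right_cancel₀ hcne key
  have harg : (2 : ℂ) * Complex.I * n * a = Complex.I * n * (2 * a) := by ring
  constructor
  · rw [harg]; exact hmain
  · -- derive lam * n = 2 sin (n a)
    have hexp_ne : Complex.exp (Complex.I * n * a) ≠ 0 := Complex.exp_ne_zero _
    have h1 : Complex.exp (Complex.I * n * a) - Complex.exp (-(Complex.I * n * a)) =
        Complex.I * lam * n := by
      have h2 : Complex.exp (Complex.I * n * (2 * a)) =
          Complex.exp (Complex.I * n * a) * Complex.exp (Complex.I * n * a) := by
        rw [← Complex.exp_add]; congr 1; ring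
      have h3 : Complex.exp (-(Complex.I * n * a)) * Complex.exp (Complex.I * n * a) = 1 := by
        rw [← Complex.exp_add]; simp
      have hmul : (Complex.exp (Complex.I * n * a) - Complex.exp (-(Complex.I * n * a))) *
          Complex.exp (Complex.I * n * a) =
          (Complex.I * lam * n) * Complex.exp (Complex.I * n * a) := by
        calc (Complex.exp (Complex.I * n * a) - Complex.exp (-(Complex.I * n * a))) *
            Complex.exp (Complex.I * n * a)
            = Complex.exp (Complex.I * n * a) * Complex.exp (Complex.I * n * a) -
              Complex.exp (-(Complex.I * n * a)) * Complex.exp (Complex.I * n * a) := by ring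
          _ = Complex.exp (Complex.I * n * (2 * a)) - 1 := by rw [← h2, h3]
          _ = (Complex.I * lam * n) * Complex.exp (Complex.I * n * a) := by
              rw [hmain]
      exact mul_right_cancel₀ hexp_ne hmul
    have hsin : Complex.exp (Complex.I * n * a) - Complex.exp (-(Complex.I * n * a)) =
        2 * Complex.I * Complex.sin ((n : ℂ) * a) := by
      have e1 : Complex.I * (n : ℂ) * (a : ℂ) = ((n : ℂ) * a) * Complex.I := by ring
      have e2 : (-((n : ℂ) * (a : ℂ))) * Complex.I = -(((n : ℂ) * a) * Complex.I) := by ring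
      rw [Complex.sin, e1, ← e2]
      linear_combination (Complex.exp (((n : ℂ) * ↑a) * Complex.I) -
        Complex.exp ((-((n : ℂ) * ↑a)) * Complex.I)) * Complex.I_sq
    have h4 : Complex.I * lam * n = 2 * Complex.I * Complex.sin ((n : ℂ) * a) := by
      rw [← h1, hsin]
    have h5 : (lam : ℂ) * n = 2 * Complex.sin ((n : ℂ) * a) := by
      have h4' : Complex.I * ((lam : ℂ) * n) = Complex.I * (2 * Complex.sin ((n : ℂ) * a)) := by
        linear_combination h4
      exact mul_left_cancel₀ Complex.I_ne_zero h4'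
    exact_mod_cast h5
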